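/- For all nonzero complex numbers x, y and z: x − 1/x + y − 1/y + z − 1/z − xyz + 1/(xyz) = (1 − xy)(1 − xz)(1 − yz)/(xyz). Consequently, if x, y and z lie on the complex unit circle, the left-hand side vanishes if and only if xy = 1, xz = 1 or yz = 1. -/

import Mathlib

lemma beukers_aux (x y z : ℂ) (hx : x ≠ 0) (hy : y ≠ 0) (hz : z ≠ 0) :
    x - 1 / x + y - 1 / y + z - 1 / z - x * y * z + 1 / (x * y * z) =
      (1 - x * y) * (1 - x * z) * (1 - y * z) / (x * y * z) := by
  field_simp
  ring

theorem beukers_quartic_identity :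
    (∀ x y z : ℂ, x ≠ 0 → y ≠ 0 → z ≠ 0 →
      x - 1 / x + y - 1 / y + z - 1 / z - x * y * z + 1 / (x * y * z) =
        (1 - x * y) * (1 - x * z) * (1 - y * z) / (x * y * z)) ∧
    (∀ x y z : ℂ, ‖x‖ = 1 → ‖y‖ = 1 → ‖z‖ = 1 →
      (x - 1 / x + y - 1 / y + z - 1 / z - x * y * z + 1 / (x * y * z) = 0 ↔
        x * y = 1 ∨ x * z = 1 ∨ y * z = 1)) := by
  refine ⟨beukers_aux, ?_⟩
  intro x y z hx hy hz
  have hx0 : x ≠ 0 := by intro h; simp [h] at hx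
  have hy0 : y ≠ 0 := by intro h; simp [h] at hy
  have hz0 : z ≠ 0 := by intro h; simp [h] at hz
  rw [beukers_aux x y z hx0 hy0 hz0, div_eq_zero_iff]
  simp only [mul_ne_zero hx0 hy0, mul_ne_zero (mul_ne_zero hx0 hy0) hz0, or_false,
    mul_eq_zero, sub_eq_zero]
  tauto
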